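/- For the sequence x_0 = 1, x_{k+1} = x_k * (1 + ln(1 + 1/x_k)), the reciprocal sequence y_k = 1/x_k satisfies y_{k+1} = y_k / (1 + ln(1 + y_k)), and x_k / k → 1 as k → ∞. -/

import Mathlib

open Filter Real

theorem stmt_8 (x : ℕ → ℝ)
    (h0 : x 0 = 1)
    (hrec : ∀ k, x (k + 1) = x k * (1 + Real.log (1 + 1 / x k))) :
    (∀ k, 1 / x (k + 1) = (1 / x k) / (1 + Real.log (1 + 1 / x k))) ∧
      Tendsto (fun k : ℕ => x k / (k : ℝ)) atTop (nhds 1) := by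
  -- basic positivity
  have hx1 : ∀ k, 1 ≤ x k := by
    intro k
    induction k with
    | zero => simp [h0]
    | succ k ih =>
      have hpos : (0:ℝ) < x k := lt_of_lt_of_le one_pos ih
      have hlog : 0 ≤ Real.log (1 + 1 / x k) :=
        Real.log_nonneg (le_add_of_nonneg_right (by positivity))
      have := hrec k
      nlinarith [this]
  have hxpos : ∀ k, (0:ℝ) < x k := fun k => lt_of_lt_of_le one_pos (hx1 k)
  constructor
  · intro k
    rw [hrec k, ← div_div]
  -- upper bound : x k ≤ k + 1
  have hupper : ∀ k, x k ≤ (k : ℝ) + 1 := by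
    intro k
    induction k with
    | zero => simp [h0]
    | succ k ih =>
      have hpos := hxpos k
      have hlog : Real.log (1 + 1 / x k) ≤ 1 / x k := by
        have := Real.log_le_sub_one_of_pos (show (0:ℝ) < 1 + 1 / x k by positivity)
        linarith
      have h2 : x k * Real.log (1 + 1 / x k) ≤ 1 := by
        have := mul_le_mul_of_nonneg_left hlog (le_of_lt hpos)
        rw [mul_one_div, div_self (ne_of_gt hpos)] at this
        exact this
      have := hrec k
      push_cast
      nlinarith
  -- step lower bound: x (k+1) ≥ x k + 1 - 1/(x k + 1)
  have hstep : ∀ k, x k + 1 - 1 / (x k + 1) ≤ x (k + 1) := by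
    intro k
    have hpos := hxpos k
    have hlog : 1 / (x k + 1) ≤ Real.log (1 + 1 / x k) := by
      have h := Real.one_sub_inv_le_log_of_pos (show (0:ℝ) < 1 + 1 / x k by positivity)
      have hne : (1 + 1 / x k) ≠ 0 := by positivity
      have hinv : (1 + 1 / x k)⁻¹ = x k / (x k + 1) := by
        rw [inv_eq_one_div]
        field_simp
      rw [hinv] at h
      have : 1 - x k / (x k + 1) = 1 / (x k + 1) := by
        field_simp
        ring
      linarith [this ▸ h]
    have h2 : x k / (x k + 1) ≤ x k * Real.log (1 + 1 / x k) := by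
      have := mul_le_mul_of_nonneg_left hlog (le_of_lt hpos)
      rw [mul_one_div] at this
      exact this
    have h3 : x k / (x k + 1) = 1 - 1 / (x k + 1) := by field_simp; ring
    have := hrec k
    nlinarith
  -- crude lower bound
  have hhalf : ∀ k : ℕ, 1 + (k : ℝ) / 2 ≤ x k := by
    intro k
    induction k with
    | zero => simp [h0]
    | succ k ih =>
      have h1 := hx1 k
      have h2 : 1 / (x k + 1) ≤ 1 / 2 := by
        rw [div_le_div_iff₀ (by linarith) (by norm_num)]
        linarith
      have := hstep k
      push_cast
      linarith
  -- refined lower bound: x n ≥ n + 1 - 2 log (n+3)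
  have hlower : ∀ k : ℕ, (k : ℝ) + 1 - 2 * Real.log ((k : ℝ) + 3) ≤ x k := by
    intro k
    induction k with
    | zero =>
      have : (0:ℝ) ≤ Real.log 3 := Real.log_nonneg (by norm_num)
      simp [h0]; linarith
    | succ k ih =>
      have hk4 : (0:ℝ) < (k:ℝ) + 4 := by positivity
      have hk3 : (0:ℝ) < (k:ℝ) + 3 := by positivity
      -- log(k+4) - log(k+3) ≥ 1/(k+4)
      have hlog : 1 / ((k:ℝ) + 4) ≤ Real.log ((k:ℝ) + 4) - Real.log ((k:ℝ) + 3) := by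
        rw [← Real.log_div (ne_of_gt hk4) (ne_of_gt hk3)]
        have h := Real.one_sub_inv_le_log_of_pos (show (0:ℝ) < ((k:ℝ)+4)/((k:ℝ)+3) by positivity)
        have : 1 - (((k:ℝ)+4)/((k:ℝ)+3))⁻¹ = 1 / ((k:ℝ) + 4) := by
          rw [inv_div]; field_simp; norm_num
        linarith [this ▸ h]
      -- x k ≥ 1 + k/2, so 1/(x k + 1) ≤ 2/(k+4)
      have h1 : 1 / (x k + 1) ≤ 2 / ((k:ℝ) + 4) := by
        have hh := hhalf k
        rw [div_le_div_iff₀ (by linarith [hx1 k]) hk4]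
        nlinarith
      have := hstep k
      have hcast : Real.log ((k:ℝ) + 1 + 3) = Real.log ((k:ℝ) + 4) := by
        rw [show ((k:ℝ) + 1 + 3) = (k:ℝ) + 4 from by ring]
      have h2 : 2 / ((k:ℝ) + 4) = 2 * (1 / ((k:ℝ) + 4)) := by ring
      push_cast
      rw [hcast]
      linarith
  -- squeeze
  have hub : Tendsto (fun n : ℕ => ((n : ℝ) + 1) / n) atTop (nhds 1) := by
    have : (fun n : ℕ => ((n : ℝ) + 1) / n) =ᶠ[atTop] fun n : ℕ => 1 + 1 / (n:ℝ) := by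
      filter_upwards [eventually_gt_atTop 0] with n hn
      have : (n:ℝ) ≠ 0 := by positivity
      field_simp
    rw [tendsto_congr' this]
    have := tendsto_one_div_atTop_nhds_zero_nat (𝕜 := ℝ)
    simpa using (tendsto_const_nhds.add this)
  have hlogdiv : Tendsto (fun n : ℕ => Real.log ((n:ℝ) + 3) / ((n:ℝ) + 3)) atTop (nhds 0) := by
    have hmain : Tendsto (fun y : ℝ => Real.log y / y) atTop (nhds 0) :=
      Real.isLittleO_log_id_atTop.tendsto_div_nhds_zero
    exact hmain.comp (tendsto_atTop_add_const_right atTop 3 tendsto_natCast_atTop_atTop)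
  have hratio : Tendsto (fun n : ℕ => ((n:ℝ) + 3) / n) atTop (nhds 1) := by
    have : (fun n : ℕ => ((n : ℝ) + 3) / n) =ᶠ[atTop] fun n : ℕ => 1 + 3 * (1 / (n:ℝ)) := by
      filter_upwards [eventually_gt_atTop 0] with n hn
      have : (n:ℝ) ≠ 0 := by positivity
      field_simp
    rw [tendsto_congr' this]
    have := tendsto_one_div_atTop_nhds_zero_nat (𝕜 := ℝ)
    have h2 := this.const_mul (3:ℝ)
    simpa using tendsto_const_nhds.add h2
  have hlogn : Tendsto (fun n : ℕ => Real.log ((n:ℝ) + 3) / n) atTop (nhds 0) := by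
    have : (fun n : ℕ => Real.log ((n:ℝ) + 3) / n) =ᶠ[atTop]
        fun n : ℕ => (Real.log ((n:ℝ) + 3) / ((n:ℝ) + 3)) * (((n:ℝ) + 3) / n) := by
      filter_upwards [eventually_gt_atTop 0] with n hn
      have h1 : (n:ℝ) ≠ 0 := by positivity
      have h2 : (n:ℝ) + 3 ≠ 0 := by positivity
      field_simp
    rw [tendsto_congr' this]
    simpa using hlogdiv.mul hratio
  have hlb : Tendsto (fun n : ℕ => ((n:ℝ) + 1 - 2 * Real.log ((n:ℝ) + 3)) / n) atTop (nhds 1) := by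
    have heq : (fun n : ℕ => ((n:ℝ) + 1 - 2 * Real.log ((n:ℝ) + 3)) / n) =ᶠ[atTop]
        fun n : ℕ => ((n:ℝ) + 1) / n - 2 * (Real.log ((n:ℝ) + 3) / n) := by
      filter_upwards [eventually_gt_atTop 0] with n hn
      have : (n:ℝ) ≠ 0 := by positivity
      field_simp
    rw [tendsto_congr' heq]
    have := hub.sub (hlogn.const_mul (2:ℝ))
    simpa using this
  apply tendsto_of_tendsto_of_tendsto_of_le_of_le' hlb hub
  · filter_upwards [eventually_gt_atTop 0] with n hn
    have hnp : (0:ℝ) < (n:ℝ) := by exact_mod_cast hn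
    exact div_le_div_of_nonneg_right (hlower n) hnp.le
  · filter_upwards [eventually_gt_atTop 0] with n hn
    have hnp : (0:ℝ) < (n:ℝ) := by exact_mod_cast hn
    exact div_le_div_of_nonneg_right (hupper n) hnp.le
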